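/- Assuming π(x)·(log x)/x → 1 as x → ∞ and that π(x) − li(x)/1 satisfies π(x)/x − li(x)/x = o(1/(log x)^t) (x → ∞) for all t > 0, one has π(x)/x − 1/(H_x − (1+γ)) ~ 1/(log x)^3 (x → ∞), where H_x = ψ(x+1) + γ; in particular lim_{x→∞} (H_x − x/π(x)) = 1 + γ. -/

import Mathlib

open Real Filter Asymptotics Topology MeasureTheory

/-- Principal value of `∫_0^x dt/(log t)^m` around the singularity at `t = 1`. -/
noncomputable def pvLogInt (m : ℕ) (x : ℝ) : ℝ :=
  limUnder (nhdsWithin (0:ℝ) (Set.Ioi 0)) (fun ε =>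
    (∫ t in (0:ℝ)..(1 - ε), 1 / (Real.log t) ^ m) +
      ∫ t in (1 + ε)..x, 1 / (Real.log t) ^ m)

/-- `li x` is the Cauchy principal value of `∫_0^x dt / log t`. -/
noncomputable def li (x : ℝ) : ℝ := pvLogInt 1 x

/-- The digamma function `ψ = Γ'/Γ`. -/
noncomputable def digamma (x : ℝ) : ℝ := deriv Real.Gamma x / Real.Gamma x

/-- The continuous interpolation `H_x = ψ(x+1) + γ` of the harmonic numbers. -/
noncomputable def harmonicInterp (x : ℝ) : ℝ :=
  digamma (x + 1) + Real.eulerMascheroniConstant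


noncomputable def hfun (t : ℝ) : ℝ := (Real.log t)⁻¹ - (t - 1)⁻¹

lemma hfun_bounds {t : ℝ} (ht : 0 < t) (ht1 : t ≠ 1) : 0 ≤ hfun t ∧ hfun t ≤ 1 := by
  have hlog_le : Real.log t ≤ t - 1 := Real.log_le_sub_one_of_pos ht
  have h2 := Real.log_le_sub_one_of_pos (inv_pos.mpr ht)
  rw [Real.log_inv] at h2
  have hinv : t * t⁻¹ = 1 := mul_inv_cancel₀ ht.ne'
  have hlog_ge : t - 1 ≤ Real.log t * t := by nlinarith
  have hprod : 0 < Real.log t * (t - 1) := by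
    rcases lt_or_gt_of_ne ht1 with h | h
    · have h1 : Real.log t < 0 := Real.log_neg ht h
      nlinarith
    · have h1 : 0 < Real.log t := Real.log_pos h
      nlinarith
  have hne : Real.log t ≠ 0 := by
    intro h; rw [h] at hprod; simp at hprod
  have ht1' : t - 1 ≠ 0 := sub_ne_zero.mpr ht1
  have key : hfun t = (t - 1 - Real.log t) / (Real.log t * (t - 1)) := by
    unfold hfun
    field_simp
  constructor
  · rw [key]; exact div_nonneg (by linarith) hprod.le
  · rw [key, div_le_one hprod]; nlinarith

lemma hfun_measurable : Measurable hfun :=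
  (Real.measurable_log.inv).sub ((measurable_id.sub_const 1).inv)

lemma hfun_intervalIntegrable {a b : ℝ} (ha : 0 ≤ a) (hab : a ≤ b) :
    IntervalIntegrable hfun MeasureTheory.volume a b := by
  rw [intervalIntegrable_iff_integrableOn_Ioc_of_le hab]
  apply MeasureTheory.Measure.integrableOn_of_bounded (M := 1)
  · exact (measure_Ioc_lt_top).ne
  · exact hfun_measurable.aestronglyMeasurable
  · have hne : ∀ᵐ t : ℝ, t ≠ 1 := by
      rw [MeasureTheory.ae_iff]
      simp [show {t : ℝ | ¬ t ≠ 1} = {1} by ext t; simp]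
    filter_upwards [MeasureTheory.ae_restrict_mem measurableSet_Ioc,
      MeasureTheory.ae_restrict_of_ae hne] with t htmem htne
    have h0 : 0 < t := lt_of_le_of_lt ha htmem.1
    obtain ⟨h1, h2⟩ := hfun_bounds h0 htne
    rw [Real.norm_eq_abs, abs_le]
    exact ⟨by linarith, h2⟩

lemma integral_inv_sub_one {a b : ℝ} (h : (1:ℝ) ∉ Set.uIcc a b) :
    ∫ t in a..b, (t-1)⁻¹ = Real.log ((b-1)/(a-1)) := by
  have h0 : (0:ℝ) ∉ Set.uIcc (a-1) (b-1) := by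
    intro hmem
    apply h
    simp only [Set.mem_uIcc] at hmem ⊢
    rcases hmem with ⟨p, q⟩ | ⟨p, q⟩
    · exact Or.inl ⟨by linarith, by linarith⟩
    · exact Or.inr ⟨by linarith, by linarith⟩
  have := intervalIntegral.integral_comp_sub_right (a := a) (b := b) (fun u : ℝ => u⁻¹) 1
  rw [this, integral_inv h0]

lemma log_inv_split {a b : ℝ} (h0 : 0 ≤ a) (hab : a ≤ b) (h1 : (1:ℝ) ∉ Set.uIcc a b) :
    ∫ t in a..b, (Real.log t)⁻¹ = (∫ t in a..b, hfun t) + Real.log ((b-1)/(a-1)) := by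
  have i1 : IntervalIntegrable hfun MeasureTheory.volume a b := hfun_intervalIntegrable h0 hab
  have i2 : IntervalIntegrable (fun t : ℝ => (t-1)⁻¹) MeasureTheory.volume a b := by
    apply ContinuousOn.intervalIntegrable
    apply ContinuousOn.inv₀
    · exact (continuous_id.sub continuous_const).continuousOn
    · intro t ht
      have : t ≠ 1 := fun e => h1 (e ▸ ht)
      exact sub_ne_zero.mpr this
  have e : ∫ t in a..b, (Real.log t)⁻¹ = ∫ t in a..b, (hfun t + (t-1)⁻¹) := by
    congr 1
    funext t
    simp [hfun]
  rw [e, intervalIntegral.integral_add i1 i2, integral_inv_sub_one h1]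

lemma li_eq {x : ℝ} (hx : 2 ≤ x) :
    li x = (∫ t in (0:ℝ)..1, hfun t) + (∫ t in (1:ℝ)..x, hfun t) + Real.log (x - 1) := by
  have m1 : Set.Ioo (0:ℝ) (1/2) ∈ 𝓝[>] (0:ℝ) :=
    Ioo_mem_nhdsGT_of_mem ⟨le_refl _, by norm_num⟩
  have c1 : ContinuousOn (fun y => ∫ t in (0:ℝ)..y, hfun t) (Set.uIcc (0:ℝ) 2) :=
    intervalIntegral.continuousOn_primitive_interval'
      (hfun_intervalIntegrable le_rfl (by norm_num)) Set.left_mem_uIcc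
  have c2 : ContinuousOn (fun y => ∫ t in (1:ℝ)..y, hfun t) (Set.uIcc (1:ℝ) 2) :=
    intervalIntegral.continuousOn_primitive_interval'
      (hfun_intervalIntegrable (by norm_num) (by norm_num)) Set.left_mem_uIcc
  have t1 : Tendsto (fun ε : ℝ => ∫ t in (0:ℝ)..(1-ε), hfun t) (𝓝[>] 0)
      (𝓝 (∫ t in (0:ℝ)..1, hfun t)) := by
    have hmap : Tendsto (fun ε : ℝ => 1 - ε) (𝓝[>] 0) (𝓝[Set.uIcc (0:ℝ) 2] 1) := by
      apply tendsto_nhdsWithin_of_tendsto_nhds_of_eventually_within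
      · exact ((continuous_const.sub continuous_id).tendsto' 0 1 (by norm_num)).mono_left
          nhdsWithin_le_nhds
      · filter_upwards [m1] with ε hε
        rw [Set.uIcc_of_le (by norm_num : (0:ℝ) ≤ 2)]
        exact ⟨by linarith [hε.1, hε.2], by linarith [hε.1]⟩
    exact Filter.Tendsto.comp
      (c1 1 (by rw [Set.uIcc_of_le (by norm_num : (0:ℝ) ≤ 2)]; constructor <;> norm_num)) hmap
  have t2 : Tendsto (fun ε : ℝ => ∫ t in (1+ε)..x, hfun t) (𝓝[>] 0)
      (𝓝 (∫ t in (1:ℝ)..x, hfun t)) := by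
    have hmap : Tendsto (fun ε : ℝ => 1 + ε) (𝓝[>] 0) (𝓝[Set.uIcc (1:ℝ) 2] 1) := by
      apply tendsto_nhdsWithin_of_tendsto_nhds_of_eventually_within
      · exact ((continuous_const.add continuous_id).tendsto' 0 1 (by norm_num)).mono_left
          nhdsWithin_le_nhds
      · filter_upwards [m1] with ε hε
        rw [Set.uIcc_of_le (by norm_num : (1:ℝ) ≤ 2)]
        exact ⟨by linarith [hε.1], by linarith [hε.2]⟩
    have base : Tendsto (fun ε : ℝ => (∫ t in (1:ℝ)..x, hfun t) - ∫ t in (1:ℝ)..(1+ε), hfun t)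
        (𝓝[>] 0) (𝓝 (∫ t in (1:ℝ)..x, hfun t)) := by
      have h2 : Tendsto (fun ε : ℝ => ∫ t in (1:ℝ)..(1+ε), hfun t) (𝓝[>] 0)
          (𝓝 (∫ t in (1:ℝ)..(1:ℝ), hfun t)) :=
        Filter.Tendsto.comp
          (c2 1 (by rw [Set.uIcc_of_le (by norm_num : (1:ℝ) ≤ 2)]; constructor <;> norm_num)) hmap
      rw [intervalIntegral.integral_same] at h2
      simpa using tendsto_const_nhds.sub h2
    apply base.congr'
    filter_upwards [m1] with ε hε
    have hi1 : IntervalIntegrable hfun MeasureTheory.volume 1 (1+ε) :=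
      hfun_intervalIntegrable (by norm_num) (by linarith [hε.1])
    have hi2 : IntervalIntegrable hfun MeasureTheory.volume (1+ε) x :=
      hfun_intervalIntegrable (by linarith [hε.1]) (by linarith [hε.2])
    rw [sub_eq_iff_eq_add']
    exact (intervalIntegral.integral_add_adjacent_intervals hi1 hi2).symm
  have key : Tendsto (fun ε : ℝ =>
      (∫ t in (0:ℝ)..(1 - ε), 1 / (Real.log t) ^ 1) + ∫ t in (1 + ε)..x, 1 / (Real.log t) ^ 1)
      (𝓝[>] 0)
      (𝓝 ((∫ t in (0:ℝ)..1, hfun t) + (∫ t in (1:ℝ)..x, hfun t) + Real.log (x - 1))) := by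
    have base := (t1.add t2).add (tendsto_const_nhds (x := Real.log (x-1)))
    apply base.congr'
    filter_upwards [m1] with ε hε
    have hε0 := hε.1
    have hε2 := hε.2
    have hni1 : (1:ℝ) ∉ Set.uIcc (0:ℝ) (1-ε) := by
      rw [Set.uIcc_of_le (by linarith : (0:ℝ) ≤ 1-ε)]
      intro hmem
      have := hmem.2
      linarith
    have s1 : ∫ t in (0:ℝ)..(1-ε), (Real.log t)⁻¹
        = (∫ t in (0:ℝ)..(1-ε), hfun t) + Real.log ε := by
      rw [log_inv_split le_rfl (by linarith) hni1]
      norm_num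
    have hni2 : (1:ℝ) ∉ Set.uIcc (1+ε) x := by
      rw [Set.uIcc_of_le (by linarith : (1:ℝ)+ε ≤ x)]
      intro hmem
      have := hmem.1
      linarith
    have s2 : ∫ t in (1+ε)..x, (Real.log t)⁻¹
        = (∫ t in (1+ε)..x, hfun t) + (Real.log (x-1) - Real.log ε) := by
      rw [log_inv_split (by linarith) (by linarith) hni2]
      rw [add_sub_cancel_left, Real.log_div (by linarith) (by linarith)]
    simp only [pow_one, one_div]
    rw [s1, s2]
    ring
  exact key.limUnder_eq

noncomputable def Cli : ℝ := (∫ t in (0:ℝ)..1, hfun t) + (∫ t in (1:ℝ)..2, hfun t)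

lemma logpow_inv_continuousOn (k : ℕ) {s : Set ℝ} (hs : ∀ t ∈ s, 2 ≤ t) :
    ContinuousOn (fun t : ℝ => ((Real.log t)^k)⁻¹) s := by
  apply ContinuousOn.inv₀
  · apply ContinuousOn.pow
    exact Real.continuousOn_log.mono (fun t ht => by
      have := hs t ht; simp only [Set.mem_compl_iff, Set.mem_singleton_iff]; intro h; rw [h] at this; linarith)
  · intro t ht
    exact pow_ne_zero _ (Real.log_pos (by linarith [hs t ht])).ne'

lemma logpow_inv_intervalIntegrable (k : ℕ) {a b : ℝ} (ha : 2 ≤ a) (hab : a ≤ b) :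
    IntervalIntegrable (fun t : ℝ => ((Real.log t)^k)⁻¹) MeasureTheory.volume a b := by
  apply ContinuousOn.intervalIntegrable
  apply logpow_inv_continuousOn
  intro t ht
  rw [Set.uIcc_of_le hab] at ht
  linarith [ht.1]

lemma li_eq_integral {x : ℝ} (hx : 2 ≤ x) :
    li x = Cli + ∫ t in (2:ℝ)..x, (Real.log t)⁻¹ := by
  rw [li_eq hx, Cli]
  have hsplit : (∫ t in (1:ℝ)..2, hfun t) + (∫ t in (2:ℝ)..x, hfun t)
      = ∫ t in (1:ℝ)..x, hfun t :=
    intervalIntegral.integral_add_adjacent_intervals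
      (hfun_intervalIntegrable (by norm_num) (by norm_num))
      (hfun_intervalIntegrable (by norm_num) hx)
  have h1 : (1:ℝ) ∉ Set.uIcc (2:ℝ) x := by
    rw [Set.uIcc_of_le hx]
    intro hmem
    linarith [hmem.1]
  rw [log_inv_split (by norm_num) hx h1]
  rw [← hsplit]
  norm_num
  ring

lemma ibp (m : ℕ) {x : ℝ} (hx : 2 ≤ x) :
    ∫ t in (2:ℝ)..x, ((Real.log t)^(m+1))⁻¹
      = x/(Real.log x)^(m+1) - 2/(Real.log 2)^(m+1)
        + (m+1) * ∫ t in (2:ℝ)..x, ((Real.log t)^(m+2))⁻¹ := by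
  have hder : ∀ t ∈ Set.uIcc (2:ℝ) x, HasDerivAt (fun t : ℝ => t * ((Real.log t)^(m+1))⁻¹)
      (((Real.log t)^(m+1))⁻¹ - ((m:ℝ)+1) * ((Real.log t)^(m+2))⁻¹) t := by
    intro t ht
    rw [Set.uIcc_of_le hx] at ht
    have ht2 : 2 ≤ t := ht.1
    have ht0 : t ≠ 0 := by linarith
    have hlog : 0 < Real.log t := Real.log_pos (by linarith)
    have h1 : HasDerivAt Real.log t⁻¹ t := Real.hasDerivAt_log ht0
    have h2 : HasDerivAt (fun t : ℝ => (Real.log t)^(m+1))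
        (((m:ℝ)+1) * (Real.log t)^m * t⁻¹) t := by
      have := h1.fun_pow (m+1)
      simpa using this
    have h3 := h2.fun_inv (pow_ne_zero _ hlog.ne')
    have h4 : HasDerivAt (fun t : ℝ => t * ((Real.log t)^(m+1))⁻¹) _ t := (hasDerivAt_id t).fun_mul h3
    convert h4 using 1
    simp only [id]
    field_simp
    ring
  have hint : IntervalIntegrable (fun t : ℝ =>
      ((Real.log t)^(m+1))⁻¹ - ((m:ℝ)+1) * ((Real.log t)^(m+2))⁻¹) MeasureTheory.volume 2 x :=
    (logpow_inv_intervalIntegrable (m+1) le_rfl hx).sub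
      ((logpow_inv_intervalIntegrable (m+2) le_rfl hx).const_mul _)
  have hFTC := intervalIntegral.integral_eq_sub_of_hasDerivAt hder hint
  rw [intervalIntegral.integral_sub (logpow_inv_intervalIntegrable (m+1) le_rfl hx)
    ((logpow_inv_intervalIntegrable (m+2) le_rfl hx).const_mul _),
    intervalIntegral.integral_const_mul] at hFTC
  rw [div_eq_mul_inv, div_eq_mul_inv]
  push_cast
  linarith [hFTC]

lemma J_nonneg {x : ℝ} (hx : 2 ≤ x) : 0 ≤ ∫ t in (2:ℝ)..x, ((Real.log t)^4)⁻¹ := by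
  apply intervalIntegral.integral_nonneg hx
  intro t ht
  positivity

lemma J_bound {x : ℝ} (hx : 4 ≤ x) :
    ∫ t in (2:ℝ)..x, ((Real.log t)^4)⁻¹
      ≤ Real.sqrt x * ((Real.log 2)^4)⁻¹ + (16*x) * ((Real.log x)^4)⁻¹ := by
  have hx0 : (0:ℝ) ≤ x := by linarith
  have h42 : Real.sqrt 4 = 2 := by
    rw [show (4:ℝ) = 2^2 by norm_num, Real.sqrt_sq (by norm_num : (0:ℝ) ≤ 2)]
  have hsx2 : 2 ≤ Real.sqrt x := by
    rw [← h42]; exact Real.sqrt_le_sqrt hx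
  have hsxx : Real.sqrt x ≤ x := by
    have := Real.sqrt_le_sqrt (show x ≤ x^2 by nlinarith)
    rwa [Real.sqrt_sq hx0] at this
  have hlog2 : 0 < Real.log 2 := Real.log_pos (by norm_num)
  have hlogx : 0 < Real.log x := Real.log_pos (by linarith)
  have i1 := logpow_inv_intervalIntegrable 4 le_rfl hsx2
  have i2 := logpow_inv_intervalIntegrable 4 hsx2 hsxx
  have hsplit := intervalIntegral.integral_add_adjacent_intervals
    (f := fun t : ℝ => ((Real.log t)^4)⁻¹) (μ := MeasureTheory.volume) i1 i2
  rw [← hsplit]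
  have b1 : (∫ t in (2:ℝ)..(Real.sqrt x), ((Real.log t)^4)⁻¹)
      ≤ (Real.sqrt x - 2) * ((Real.log 2)^4)⁻¹ := by
    have := intervalIntegral.integral_mono_on (μ := MeasureTheory.volume) hsx2 i1
      (intervalIntegrable_const (c := ((Real.log 2)^4)⁻¹))
      (fun t ht => by
        have h2t : Real.log 2 ≤ Real.log t := Real.log_le_log (by norm_num) ht.1
        exact inv_anti₀ (by positivity) (pow_le_pow_left₀ hlog2.le h2t 4))
    simpa [smul_eq_mul] using this
  have b2 : (∫ t in (Real.sqrt x)..x, ((Real.log t)^4)⁻¹)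
      ≤ (x - Real.sqrt x) * ((Real.log (Real.sqrt x))^4)⁻¹ := by
    have hlogsx : 0 < Real.log (Real.sqrt x) := Real.log_pos (by linarith)
    have := intervalIntegral.integral_mono_on (μ := MeasureTheory.volume) hsxx i2
      (intervalIntegrable_const (c := ((Real.log (Real.sqrt x))^4)⁻¹))
      (fun t ht => by
        have h2t : Real.log (Real.sqrt x) ≤ Real.log t := Real.log_le_log (by linarith) ht.1
        exact inv_anti₀ (by positivity) (pow_le_pow_left₀ hlogsx.le h2t 4))
    simpa [smul_eq_mul] using this
  have hlogsq : ((Real.log (Real.sqrt x))^4)⁻¹ = 16 * ((Real.log x)^4)⁻¹ := by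
    rw [Real.log_sqrt hx0]
    rw [div_pow]
    rw [inv_div]
    norm_num
    ring
  rw [hlogsq] at b2
  have hfin : (x - Real.sqrt x) * (16 * ((Real.log x)^4)⁻¹) ≤ 16*x*((Real.log x)^4)⁻¹ := by
    have h1 : (0:ℝ) ≤ ((Real.log x)^4)⁻¹ := by positivity
    have h2 : (0:ℝ) ≤ Real.sqrt x := Real.sqrt_nonneg x
    nlinarith
  have hfin2 : (Real.sqrt x - 2) * ((Real.log 2)^4)⁻¹ ≤ Real.sqrt x * ((Real.log 2)^4)⁻¹ := by
    have h1 : (0:ℝ) ≤ ((Real.log 2)^4)⁻¹ := by positivity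
    nlinarith
  linarith

lemma log_pow_div_rpow_tendsto (k : ℕ) {s : ℝ} (hs : 0 < s) :
    Tendsto (fun x : ℝ => (Real.log x)^k / x ^ s) atTop (𝓝 0) := by
  have h := (isLittleO_log_rpow_rpow_atTop (k : ℝ) hs).tendsto_div_nhds_zero
  simpa only [Real.rpow_natCast] using h

lemma log_pow_div_tendsto (k : ℕ) : Tendsto (fun x : ℝ => (Real.log x)^k / x) atTop (𝓝 0) := by
  simpa only [Real.rpow_one] using log_pow_div_rpow_tendsto k one_pos

lemma log_pow_div_sqrt_tendsto :
    Tendsto (fun x : ℝ => (Real.log x)^3 / Real.sqrt x) atTop (𝓝 0) := by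
  have h := log_pow_div_rpow_tendsto 3 (show (0:ℝ) < 1/2 by norm_num)
  apply h.congr'
  filter_upwards [eventually_ge_atTop (0:ℝ)] with x hx
  rw [Real.sqrt_eq_rpow]

lemma const_div_log_tendsto (c : ℝ) :
    Tendsto (fun x : ℝ => c / Real.log x) atTop (𝓝 0) :=
  tendsto_const_nhds.div_atTop Real.tendsto_log_atTop

lemma li_asymp : Tendsto (fun x : ℝ =>
    (li x / x - ((Real.log x)⁻¹ + ((Real.log x)^2)⁻¹ + 2*((Real.log x)^3)⁻¹)) * (Real.log x)^3)
    atTop (𝓝 0) := by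
  set K : ℝ := 2/(Real.log 2) + 2/(Real.log 2)^2 + 4/(Real.log 2)^3 with hK
  have hlog2 : 0 < Real.log 2 := Real.log_pos (by norm_num)
  have key : ∀ x : ℝ, 4 ≤ x →
      (li x / x - ((Real.log x)⁻¹ + ((Real.log x)^2)⁻¹ + 2*((Real.log x)^3)⁻¹)) * (Real.log x)^3
      = (Cli - K) * ((Real.log x)^3 / x)
        + 6 * ((∫ t in (2:ℝ)..x, ((Real.log t)^4)⁻¹) * ((Real.log x)^3 / x)) := by
    intro x hx4
    have hx : 2 ≤ x := by linarith
    have hx0 : x ≠ 0 := by intro h; rw [h] at hx4; linarith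
    have hlogx : 0 < Real.log x := Real.log_pos (by linarith)
    have e1 := ibp 0 hx
    have e2 := ibp 1 hx
    have e3 := ibp 2 hx
    norm_num at e1 e2 e3
    have hli := li_eq_integral hx
    rw [e1, e2, e3] at hli
    rw [hli, hK]
    field_simp
    ring
  have piece1 : Tendsto (fun x : ℝ => (Cli - K) * ((Real.log x)^3 / x)) atTop (𝓝 0) := by
    simpa using (log_pow_div_tendsto 3).const_mul (Cli - K)
  have piece2 : Tendsto (fun x : ℝ =>
      (∫ t in (2:ℝ)..x, ((Real.log t)^4)⁻¹) * ((Real.log x)^3 / x)) atTop (𝓝 0) := by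
    apply tendsto_of_tendsto_of_tendsto_of_le_of_le' (g := fun _ => (0:ℝ))
      (h := fun x : ℝ => ((Real.log 2)^4)⁻¹ * ((Real.log x)^3 / Real.sqrt x)
        + 16 / Real.log x)
      tendsto_const_nhds
    · have h1 := log_pow_div_sqrt_tendsto.const_mul (((Real.log 2)^4)⁻¹)
      have h2 := const_div_log_tendsto 16
      simpa using h1.add h2
    · filter_upwards [eventually_ge_atTop (4:ℝ)] with x hx4
      have hlogx : 0 < Real.log x := Real.log_pos (by linarith)
      have hx0 : (0:ℝ) < x := by linarith
      exact mul_nonneg (J_nonneg (by linarith)) (by positivity)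
    · filter_upwards [eventually_ge_atTop (4:ℝ)] with x hx4
      have hlogx : 0 < Real.log x := Real.log_pos (by linarith)
      have hx0 : (0:ℝ) < x := by linarith
      have hsx : (0:ℝ) < Real.sqrt x := Real.sqrt_pos.mpr hx0
      have hb := J_bound hx4
      have hnn : (0:ℝ) ≤ (Real.log x)^3 / x := by positivity
      have := mul_le_mul_of_nonneg_right hb hnn
      apply le_trans this
      have heq : (Real.sqrt x * ((Real.log 2)^4)⁻¹ + (16*x) * ((Real.log x)^4)⁻¹)
          * ((Real.log x)^3 / x)
          = ((Real.log 2)^4)⁻¹ * ((Real.log x)^3 / Real.sqrt x) + 16 / Real.log x := by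
        have hss : Real.sqrt x * Real.sqrt x = x := Real.mul_self_sqrt hx0.le
        field_simp
        linear_combination (Real.log x)^4 * hss
      rw [heq]
  have piece2' : Tendsto (fun x : ℝ =>
      6 * ((∫ t in (2:ℝ)..x, ((Real.log t)^4)⁻¹) * ((Real.log x)^3 / x))) atTop (𝓝 0) := by
    simpa using piece2.const_mul (6:ℝ)
  have := piece1.add piece2'
  rw [add_zero] at this
  apply this.congr'
  filter_upwards [eventually_ge_atTop (4:ℝ)] with x hx4
  exact (key x hx4).symm

lemma digamma_nat (n : ℕ) :
    digamma ((n:ℝ) + 1) = harmonic n - Real.eulerMascheroniConstant := by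
  unfold digamma
  rw [Real.deriv_Gamma_nat n, Real.Gamma_nat_eq_factorial]
  have h : ((n.factorial : ℝ)) ≠ 0 := by
    exact_mod_cast n.factorial_ne_zero
  field_simp
  ring

lemma deriv_logGamma {x : ℝ} (hx : 0 < x) :
    deriv (fun y => Real.log (Real.Gamma y)) x = digamma x := by
  rw [deriv.log (Real.differentiableAt_Gamma (fun m => by
      have : (0:ℝ) ≤ m := Nat.cast_nonneg m
      intro h; rw [h] at hx; linarith)) (Real.Gamma_pos_of_pos hx).ne']
  rfl

lemma diff_logGamma {x : ℝ} (hx : 0 < x) :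
    DifferentiableAt ℝ (fun y => Real.log (Real.Gamma y)) x :=
  DifferentiableAt.log (Real.differentiableAt_Gamma (fun m => by
      have : (0:ℝ) ≤ m := Nat.cast_nonneg m
      intro h; rw [h] at hx; linarith)) (Real.Gamma_pos_of_pos hx).ne'

lemma digamma_mono {a b : ℝ} (ha : 0 < a) (hab : a ≤ b) : digamma a ≤ digamma b := by
  rcases eq_or_lt_of_le hab with rfl | h
  · exact le_rfl
  have hb : 0 < b := lt_trans ha h
  have hc : ConvexOn ℝ (Set.Ioi 0) (Real.log ∘ Real.Gamma) := Real.convexOn_log_Gamma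
  have e1 : digamma a = deriv (Real.log ∘ Real.Gamma) a := by
    rw [Function.comp_def, deriv_logGamma ha]
  have e2 : digamma b = deriv (Real.log ∘ Real.Gamma) b := by
    rw [Function.comp_def, deriv_logGamma hb]
  rw [e1, e2]
  have d1 : DifferentiableAt ℝ (Real.log ∘ Real.Gamma) a := by
    rw [Function.comp_def]; exact diff_logGamma ha
  have d2 : DifferentiableAt ℝ (Real.log ∘ Real.Gamma) b := by
    rw [Function.comp_def]; exact diff_logGamma hb
  calc deriv (Real.log ∘ Real.Gamma) a
      ≤ slope (Real.log ∘ Real.Gamma) a b :=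
        hc.deriv_le_slope (Set.mem_Ioi.mpr ha) (Set.mem_Ioi.mpr hb) h d1
    _ ≤ deriv (Real.log ∘ Real.Gamma) b :=
        hc.slope_le_deriv (Set.mem_Ioi.mpr ha) (Set.mem_Ioi.mpr hb) h d2

lemma digamma_log_bound {x : ℝ} (hx : 2 ≤ x) :
    |digamma (x+1) - Real.log x| ≤ 4 / x := by
  set n := ⌊x⌋₊ with hn
  have hx0 : (0:ℝ) < x := by linarith
  have hn2 : 2 ≤ n := Nat.le_floor (by exact_mod_cast hx)
  have hnx : (n:ℝ) ≤ x := Nat.floor_le hx0.le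
  have hxn : x < (n:ℝ) + 1 := Nat.lt_floor_add_one x
  have hn0 : (0:ℝ) < (n:ℝ) := by exact_mod_cast (show 0 < n by omega)
  have hn1 : (1:ℝ) ≤ (n:ℝ) := by exact_mod_cast hn2.trans' (by omega)
  have h1 : digamma ((n:ℝ)+1) = harmonic n - Real.eulerMascheroniConstant := digamma_nat n
  have h2 : digamma ((n:ℝ)+1+1) = harmonic (n+1) - Real.eulerMascheroniConstant := by
    have := digamma_nat (n+1)
    push_cast at this
    exact this
  have m1 : digamma ((n:ℝ)+1) ≤ digamma (x+1) := digamma_mono (by linarith) (by linarith)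
  have m2 : digamma (x+1) ≤ digamma ((n:ℝ)+1+1) := digamma_mono (by linarith) (by linarith)
  have g1 : Real.log n < (harmonic n : ℝ) - Real.eulerMascheroniConstant := by
    have h := Real.eulerMascheroniConstant_lt_eulerMascheroniSeq' n
    rw [Real.eulerMascheroniSeq'] at h
    rw [if_neg (by omega)] at h
    linarith
  have g2 : (harmonic (n+1) : ℝ) - Real.eulerMascheroniConstant < Real.log ((n:ℝ)+2) := by
    have h := Real.eulerMascheroniSeq_lt_eulerMascheroniConstant (n+1)
    rw [Real.eulerMascheroniSeq] at h
    push_cast at h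
    have e : ((n:ℝ)+1+1) = (n:ℝ)+2 := by ring
    rw [e] at h
    linarith
  have lx1 : Real.log x < Real.log ((n:ℝ)+1) := Real.log_lt_log hx0 hxn
  have lx0 : Real.log n ≤ Real.log x := Real.log_le_log hn0 hnx
  have key1 : Real.log ((n:ℝ)+1) - Real.log n ≤ 1/(n:ℝ) := by
    rw [← Real.log_div (by linarith) hn0.ne']
    have := Real.log_le_sub_one_of_pos (show (0:ℝ) < ((n:ℝ)+1)/n by positivity)
    have e : ((n:ℝ)+1)/n - 1 = 1/n := by field_simp; ring
    linarith
  have key2 : Real.log ((n:ℝ)+2) - Real.log n ≤ 2/(n:ℝ) := by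
    rw [← Real.log_div (by linarith) hn0.ne']
    have := Real.log_le_sub_one_of_pos (show (0:ℝ) < ((n:ℝ)+2)/n by positivity)
    have e : ((n:ℝ)+2)/n - 1 = 2/n := by field_simp; ring
    linarith
  have hx2n : x ≤ 2*(n:ℝ) := by
    have : (1:ℝ) ≤ (n:ℝ) := hn1
    linarith
  have frac1 : 1/(n:ℝ) ≤ 2/x := by
    rw [div_le_div_iff₀ hn0 hx0]
    linarith
  have frac2 : 2/(n:ℝ) ≤ 4/x := by
    rw [div_le_div_iff₀ hn0 hx0]
    linarith
  rw [abs_le]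
  constructor
  · have : digamma (x+1) - Real.log x > -(1/(n:ℝ)) := by linarith
    have h4 : (0:ℝ) < 4/x - 2/x := by
      rw [div_sub_div_same]; positivity
    linarith
  · linarith



section Key

variable (P : ℝ → ℝ)

local notation "L" => Real.log

lemma delta_tendsto : Tendsto (fun x : ℝ => digamma (x+1) - L x) atTop (𝓝 0) := by
  apply squeeze_zero_norm' (a := fun x : ℝ => 4 / x)
  · filter_upwards [eventually_ge_atTop (2:ℝ)] with x hx
    exact digamma_log_bound hx
  · exact tendsto_const_nhds.div_atTop tendsto_id

lemma delta_mul_log_tendsto :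
    Tendsto (fun x : ℝ => (digamma (x+1) - L x) * L x) atTop (𝓝 0) := by
  apply squeeze_zero_norm' (a := fun x : ℝ => 4 * (L x / x))
  · filter_upwards [eventually_ge_atTop (2:ℝ)] with x hx
    have hl : 0 ≤ L x := Real.log_nonneg (by linarith)
    have hx0 : 0 < x := by linarith
    rw [norm_mul, Real.norm_eq_abs, Real.norm_eq_abs, abs_of_nonneg hl]
    calc |digamma (x+1) - L x| * L x ≤ (4/x) * L x :=
          mul_le_mul_of_nonneg_right (digamma_log_bound hx) hl
      _ = 4 * (L x / x) := by ring
  · simpa using (log_pow_div_tendsto 1).const_mul (4:ℝ)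

lemma delta_div_log_tendsto :
    Tendsto (fun x : ℝ => (digamma (x+1) - L x) / L x) atTop (𝓝 0) :=
  (delta_tendsto).div_atTop Real.tendsto_log_atTop

variable (hEL3 : Tendsto (fun x : ℝ =>
    (P x - ((L x)⁻¹ + ((L x)^2)⁻¹ + 2*((L x)^3)⁻¹)) * (L x)^3) atTop (𝓝 0))

include hEL3

lemma keyEquiv :
    (fun x : ℝ => P x - 1/(digamma (x+1) - 1)) ~[atTop] (fun x : ℝ => 1/(L x)^(3:ℕ)) := by
  rw [Asymptotics.isEquivalent_iff_tendsto_one ?hne]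
  case hne =>
    filter_upwards [eventually_gt_atTop (1:ℝ)] with x hx
    have : 0 < L x := Real.log_pos hx
    positivity
  have hnum : Tendsto (fun x : ℝ =>
      1 - 2/(L x) + (digamma (x+1) - L x) * L x + (digamma (x+1) - L x)
        + 2*((digamma (x+1) - L x)/(L x))) atTop (𝓝 (1 - 0 + 0 + 0 + 2*0)) :=
    (((tendsto_const_nhds.sub (const_div_log_tendsto 2)).add delta_mul_log_tendsto).add
      delta_tendsto).add (delta_div_log_tendsto.const_mul 2)
  have hden : Tendsto (fun x : ℝ =>
      1 - 1/(L x) + (digamma (x+1) - L x)/(L x)) atTop (𝓝 (1 - 0 + 0)) :=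
    (tendsto_const_nhds.sub (const_div_log_tendsto 1)).add delta_div_log_tendsto
  norm_num at hnum hden
  have hmain := hEL3.add (hnum.div hden one_ne_zero)
  rw [zero_add] at hmain
  norm_num at hmain
  apply hmain.congr'
  filter_upwards [Real.tendsto_log_atTop.eventually_ge_atTop (3:ℝ),
    eventually_ge_atTop (4:ℝ)] with x hL3 hx4
  have hL0 : L x ≠ 0 := by positivity
  have hδ : |digamma (x+1) - L x| ≤ 4/x := digamma_log_bound (by linarith)
  have hδ1 : |digamma (x+1) - L x| ≤ 1 := hδ.trans (by rw [div_le_one (by linarith)]; linarith)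
  have hD : 1 ≤ digamma (x+1) - 1 := by
    have := abs_le.mp hδ1
    linarith [this.1]
  have hDne : digamma (x+1) - 1 ≠ 0 := by linarith
  have hden_ne : 1 - 1/(L x) + (digamma (x+1) - L x)/(L x) ≠ 0 := by
    have he : 1 - 1/(L x) + (digamma (x+1) - L x)/(L x) = (digamma (x+1) - 1)/(L x) := by
      field_simp
      ring
    rw [he]
    positivity
  rw [Pi.div_apply]
  have hden2 : L x - 1 + (digamma (x+1) - L x) ≠ 0 := by
    rw [show L x - 1 + (digamma (x+1) - L x) = digamma (x+1) - 1 by ring]; exact hDne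
  field_simp
  ring

lemma keyTendsto2 :
    Tendsto (fun x : ℝ => digamma (x+1) + Real.eulerMascheroniConstant - 1/(P x)) atTop
      (𝓝 (1 + Real.eulerMascheroniConstant)) := by
  have h1L : Tendsto (fun x : ℝ => 1/(L x)) atTop (𝓝 0) := const_div_log_tendsto 1
  -- E·L² → 0
  have hEL2 : Tendsto (fun x : ℝ =>
      (P x - ((L x)⁻¹ + ((L x)^2)⁻¹ + 2*((L x)^3)⁻¹)) * (L x)^2) atTop (𝓝 0) := by
    have := hEL3.mul h1L
    rw [mul_zero] at this
    apply this.congr'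
    filter_upwards [Real.tendsto_log_atTop.eventually_ge_atTop (1:ℝ)] with x hL1
    have hL0 : L x ≠ 0 := by positivity
    field_simp
  -- (P·L − 1)·L → 1
  have hPL1L : Tendsto (fun x : ℝ => (P x * L x - 1) * L x) atTop (𝓝 1) := by
    have hbase : Tendsto (fun x : ℝ =>
        (P x - ((L x)⁻¹ + ((L x)^2)⁻¹ + 2*((L x)^3)⁻¹)) * (L x)^2
          + (1 + 2/(L x))) atTop (𝓝 (0 + (1 + 2*0))) :=
      hEL2.add (tendsto_const_nhds.add (by simpa [div_eq_mul_inv] using h1L.const_mul (2:ℝ)))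
    norm_num at hbase
    apply hbase.congr'
    filter_upwards [Real.tendsto_log_atTop.eventually_ge_atTop (1:ℝ)] with x hL1
    have hL0 : L x ≠ 0 := by positivity
    field_simp
    ring
  -- P·L → 1
  have hPL : Tendsto (fun x : ℝ => P x * L x) atTop (𝓝 1) := by
    have hbase : Tendsto (fun x : ℝ =>
        (P x * L x - 1) * L x * (1/(L x)) + 1) atTop (𝓝 (1 * 0 + 1)) :=
      (hPL1L.mul h1L).add tendsto_const_nhds
    norm_num at hbase
    apply hbase.congr'
    filter_upwards [Real.tendsto_log_atTop.eventually_ge_atTop (1:ℝ)] with x hL1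
    have hL0 : L x ≠ 0 := by positivity
    field_simp
    ring
  -- L − 1/P → 1
  have hLP : Tendsto (fun x : ℝ => L x - 1/(P x)) atTop (𝓝 1) := by
    have hbase := hPL1L.div hPL one_ne_zero
    norm_num at hbase
    apply hbase.congr'
    filter_upwards [Real.tendsto_log_atTop.eventually_ge_atTop (1:ℝ),
      hPL.eventually (eventually_gt_nhds (show (1:ℝ)/2 < 1 by norm_num))] with x hL1 hPLpos
    have hL0 : 0 < L x := by linarith
    have hP0 : 0 < P x := by nlinarith
    rw [Pi.div_apply]
    field_simp
  have hfin := (delta_tendsto.add (tendsto_const_nhds (x := Real.eulerMascheroniConstant))).add hLP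
  rw [zero_add] at hfin
  have : Real.eulerMascheroniConstant + 1 = 1 + Real.eulerMascheroniConstant := add_comm _ _
  rw [this] at hfin
  exact hfin.congr (fun x => by ring)

end Key

theorem prime_density_harmonic_asymptotics
    (hpnt : Tendsto (fun x : ℝ => (Nat.primeCounting ⌊x⌋₊ : ℝ) * Real.log x / x)
      atTop (𝓝 1))
    (herr : ∀ t : ℝ, 0 < t →
      (fun x : ℝ => (Nat.primeCounting ⌊x⌋₊ : ℝ) / x - li x / x)
        =o[atTop] (fun x : ℝ => 1 / (Real.log x) ^ t)) :
    (fun x : ℝ => (Nat.primeCounting ⌊x⌋₊ : ℝ) / x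
        - 1 / (harmonicInterp x - (1 + Real.eulerMascheroniConstant)))
      ~[atTop] (fun x : ℝ => 1 / (Real.log x) ^ (3 : ℕ)) ∧
    Tendsto (fun x : ℝ => harmonicInterp x - x / (Nat.primeCounting ⌊x⌋₊ : ℝ))
      atTop (𝓝 (1 + Real.eulerMascheroniConstant)) := by
  have herr3 := herr 3 (by norm_num)
  have h1 : Tendsto (fun x : ℝ =>
      ((Nat.primeCounting ⌊x⌋₊ : ℝ)/x - li x / x) * (Real.log x)^3) atTop (𝓝 0) := by
    have h := herr3.tendsto_div_nhds_zero
    apply h.congr'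
    filter_upwards [eventually_gt_atTop (1:ℝ)] with x hx
    rw [one_div, div_inv_eq_mul, show ((3:ℝ)) = ((3:ℕ):ℝ) by norm_num, Real.rpow_natCast]
  have hEL3 : Tendsto (fun x : ℝ =>
      ((Nat.primeCounting ⌊x⌋₊ : ℝ)/x
        - ((Real.log x)⁻¹ + ((Real.log x)^2)⁻¹ + 2*((Real.log x)^3)⁻¹)) * (Real.log x)^3)
      atTop (𝓝 0) := by
    have h := h1.add li_asymp
    rw [add_zero] at h
    exact h.congr (fun x => by ring)
  constructor
  · have hk := keyEquiv (fun x : ℝ => (Nat.primeCounting ⌊x⌋₊ : ℝ)/x) hEL3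
    have he : (fun x : ℝ => (Nat.primeCounting ⌊x⌋₊ : ℝ)/x - 1/(digamma (x+1) - 1))
        = (fun x : ℝ => (Nat.primeCounting ⌊x⌋₊ : ℝ)/x
            - 1/(harmonicInterp x - (1 + Real.eulerMascheroniConstant))) := by
      funext x
      rw [harmonicInterp]
      ring_nf
    rwa [he] at hk
  · have hk := keyTendsto2 (fun x : ℝ => (Nat.primeCounting ⌊x⌋₊ : ℝ)/x) hEL3
    apply hk.congr
    intro x
    show digamma (x+1) + Real.eulerMascheroniConstant
        - 1/((Nat.primeCounting ⌊x⌋₊ : ℝ)/x) = _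
    rw [harmonicInterp, one_div_div]
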